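/- arXiv:1401.0171 — 3 statements merged into one kernel-verified Lean document; each statement's English description precedes it below -/
import Mathlib

section
/- If a 3-partite 3-graph H has a home-base partition (𝓕, 𝓡, W), then τ(H) = 2ν(H). -/
noncomputable section

attribute [local instance] Classical.propDecidable

universe u

variable {α : Type u}

/-- A 3-partite 3-uniform multihypergraph: vertex classes `V1, V2, V3` and a
multiset of edges, each edge being a triple with one vertex in each class
(parallel edges are allowed via multiplicities). -/
structure TriSys (α : Type u) where
  V1 : Finset α
  V2 : Finset α
  V3 : Finset α
  h12 : Disjoint V1 V2
  h13 : Disjoint V1 V3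
  h23 : Disjoint V2 V3
  edges : Multiset (α × α × α)
  mem1 : ∀ e ∈ edges, e.1 ∈ V1
  mem2 : ∀ e ∈ edges, e.2.1 ∈ V2
  mem3 : ∀ e ∈ edges, e.2.2 ∈ V3

/-- The vertex set of an edge. -/
def evset (e : α × α × α) : Finset α := {e.1, e.2.1, e.2.2}

/-- The coordinates of an edge, indexed by `Fin 3`. -/
def ecoord (e : α × α × α) : Fin 3 → α := ![e.1, e.2.1, e.2.2]

namespace TriSys

def verts (H : TriSys α) : Finset α := H.V1 ∪ H.V2 ∪ H.V3

/-- The vertex classes, indexed by `Fin 3`. -/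
def cls (H : TriSys α) : Fin 3 → Finset α := ![H.V1, H.V2, H.V3]

/-- A matching: a set of (pairwise vertex-disjoint) edges. -/
def IsMatching (H : TriSys α) (M : Finset (α × α × α)) : Prop :=
  (∀ e ∈ M, e ∈ H.edges) ∧
  (↑M : Set (α × α × α)).Pairwise fun e f => Disjoint (evset e) (evset f)

/-- The matching number ν. -/
def nu (H : TriSys α) : ℕ :=
  sSup {n : ℕ | ∃ M : Finset (α × α × α), H.IsMatching M ∧ M.card = n}

/-- A vertex cover: a set of vertices meeting every edge. -/
def IsCover (H : TriSys α) (T : Finset α) : Prop :=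
  ∀ e ∈ H.edges, ∃ v ∈ T, v ∈ evset e

/-- The vertex cover number τ. -/
def tau (H : TriSys α) : ℕ :=
  sInf {n : ℕ | ∃ T : Finset α, H.IsCover T ∧ T.card = n}

/-- Deletion of a set of vertices (and all edges meeting it). -/
def delete (H : TriSys α) (S : Finset α) : TriSys α where
  V1 := H.V1 \ S
  V2 := H.V2 \ S
  V3 := H.V3 \ S
  h12 := H.h12.mono Finset.sdiff_subset Finset.sdiff_subset
  h13 := H.h13.mono Finset.sdiff_subset Finset.sdiff_subset
  h23 := H.h23.mono Finset.sdiff_subset Finset.sdiff_subset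
  edges := H.edges.filter fun e => e.1 ∉ S ∧ e.2.1 ∉ S ∧ e.2.2 ∉ S
  mem1 := fun e he => by
    rw [Multiset.mem_filter] at he
    exact Finset.mem_sdiff.mpr ⟨H.mem1 e he.1, he.2.1⟩
  mem2 := fun e he => by
    rw [Multiset.mem_filter] at he
    exact Finset.mem_sdiff.mpr ⟨H.mem2 e he.1, he.2.2.1⟩
  mem3 := fun e he => by
    rw [Multiset.mem_filter] at he
    exact Finset.mem_sdiff.mpr ⟨H.mem3 e he.1, he.2.2.2⟩

end TriSys

/-- The four edges of a truncated Fano plane on vertices `a,b,c,x,y,z`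
(with classes `{a,x} ⊆ V1`, `{b,y} ⊆ V2`, `{c,z} ⊆ V3`). -/
def FanoEdges (a b c x y z : α) : Finset (α × α × α) :=
  {(a, b, c), (a, y, z), (x, b, z), (x, y, c)}

/-- The supports of the edges of `H` induced on a vertex subset `F`. -/
def inducedEdges (H : TriSys α) (F : Finset α) : Finset (α × α × α) :=
  (H.edges.filter fun e => evset e ⊆ F).toFinset

/-- `H` induces a truncated multi-Fano plane on the six-element set `F`. -/
def IsMultiFano (H : TriSys α) (F : Finset α) : Prop :=
  ∃ a b c x y z : α,
    a ∈ H.V1 ∧ x ∈ H.V1 ∧ b ∈ H.V2 ∧ y ∈ H.V2 ∧ c ∈ H.V3 ∧ z ∈ H.V3 ∧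
    a ≠ x ∧ b ≠ y ∧ c ≠ z ∧
    F = {a, b, c, x, y, z} ∧
    inducedEdges H F = FanoEdges a b c x y z

/-- The data of an FR-partition: the families `𝓕` and `𝓡` and the set `W`. -/
structure FRData (α : Type u) where
  Ffam : Finset (Finset α)
  Rfam : Finset (Finset α)
  W : Finset α

/-- The union of the members of a family of sets. -/
def famUnion (G : Finset (Finset α)) : Finset α := G.biUnion id

/-- `(𝓕, 𝓡, W)` is an FR-partition of `H`. -/
def IsFRPartition (H : TriSys α) (P : FRData α) : Prop :=
  (∀ A ∈ P.Ffam, ∀ B ∈ P.Ffam, A ≠ B → Disjoint A B) ∧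
  (∀ A ∈ P.Rfam, ∀ B ∈ P.Rfam, A ≠ B → Disjoint A B) ∧
  (∀ A ∈ P.Ffam, ∀ B ∈ P.Rfam, Disjoint A B) ∧
  (∀ A ∈ P.Ffam, Disjoint A P.W) ∧
  (∀ B ∈ P.Rfam, Disjoint B P.W) ∧
  famUnion P.Ffam ∪ famUnion P.Rfam ∪ P.W = H.verts ∧
  (∀ A ∈ P.Ffam, IsMultiFano H A) ∧
  (∀ B ∈ P.Rfam, ∃ r1 ∈ H.V1, ∃ r2 ∈ H.V2, ∃ r3 ∈ H.V3, B = {r1, r2, r3}) ∧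
  P.Ffam.card + P.Rfam.card = H.nu

/-- `w` is joined to `R` in the auxiliary bipartite graph `B_i`: some edge of
`H` contains `w` and two vertices of `R`. -/
def RAdj (H : TriSys α) (R : Finset α) (w : α) : Prop :=
  ∃ e ∈ H.edges, w ∈ evset e ∧ 2 ≤ (evset e ∩ R).card

/-- The auxiliary bipartite graph on `Rfam` and `Wi` has a matching
saturating `Rfam`. -/
def SaturatingR (H : TriSys α) (Rfam : Finset (Finset α)) (Wi : Finset α) : Prop :=
  ∃ f : Finset α → α, Set.InjOn f ↑Rfam ∧ ∀ R ∈ Rfam, f R ∈ Wi ∧ RAdj H R (f R)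

/-- Matchability of an FR-partition. -/
def IsMatchable (H : TriSys α) (P : FRData α) : Prop :=
  ∀ i : Fin 3, SaturatingR H P.Rfam (P.W ∩ H.cls i)

/-- The edge-home property: every edge is an `F`-edge or an `R`-edge. -/
def EdgeHome (H : TriSys α) (P : FRData α) : Prop :=
  ∀ e ∈ H.edges,
    (∃ A ∈ P.Ffam, evset e ⊆ A) ∨ (∃ B ∈ P.Rfam, 2 ≤ (evset e ∩ B).card)

/-- A home-base partition: a matchable FR-partition with the edge-home
property. -/
def IsHomeBasePartition (H : TriSys α) (P : FRData α) : Prop :=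
  IsFRPartition H P ∧ IsMatchable H P ∧ EdgeHome H P

/-- A home-base hypergraph: one admitting a home-base partition. -/
def IsHomeBase (H : TriSys α) : Prop :=
  ∃ P : FRData α, IsHomeBasePartition H P

/-- The neighborhood of a family `U` of `R`'s in the auxiliary bipartite
graph with `W`-side `Wi`. -/
def RNbhd (H : TriSys α) (Wi : Finset α) (U : Finset (Finset α)) : Finset α :=
  Wi.filter fun w => ∃ R ∈ U, RAdj H R w

/-- `C` is an essential subset of `Wi` in the auxiliary bipartite graph:
`C = N(U)` for some `U ⊆ Rfam` with `|U| = |C|`. -/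
def EssentialSet (H : TriSys α) (Rfam : Finset (Finset α)) (Wi : Finset α)
    (C : Finset α) : Prop :=
  ∃ U ⊆ Rfam, U.card = C.card ∧ RNbhd H Wi U = C

/-- `w` is a superfluous vertex of `Wi`: it lies in no essential subset
(equivalently, outside the maximal essential subset). -/
def Superfluous (H : TriSys α) (Rfam : Finset (Finset α)) (Wi : Finset α)
    (w : α) : Prop :=
  w ∈ Wi ∧ ∀ C, EssentialSet H Rfam Wi C → w ∉ C

/-- `w` is a superfluous `W`-vertex of the FR-partition `P` (in its class). -/
def SuperfluousVert (H : TriSys α) (P : FRData α) (w : α) : Prop :=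
  ∃ i : Fin 3, Superfluous H P.Rfam (P.W ∩ H.cls i) w

/-- `v` is an essential `W`-vertex of the FR-partition `P`. -/
def EssentialVertIn (H : TriSys α) (P : FRData α) (v : α) : Prop :=
  ∃ i : Fin 3, EssentialSet H P.Rfam (P.W ∩ H.cls i) {v}

/-- `v` is essential for `R`: it is the unique neighbor of `R` in some `B_i`. -/
def EssentialForIn (H : TriSys α) (P : FRData α) (R : Finset α) (v : α) : Prop :=
  ∃ i : Fin 3, RNbhd H (P.W ∩ H.cls i) {R} = {v}

/-- The neighborhood, inside vertex class `j`, of a set `X` of class-`k`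
vertices in the link graph of `H` over the remaining vertex class. -/
def nbr (H : TriSys α) (j k : Fin 3) (X : Finset α) : Finset α :=
  (H.cls j).filter fun v => ∃ e ∈ H.edges, ecoord e j = v ∧ ecoord e k ∈ X

/-- A cromulent triple `(Y1, Y2, X)` with `Y1 ⊆ V_i`, `Y2 ⊆ V_j`, `X ⊆ V_k`. -/
def IsCromulent (H : TriSys α) (i j k : Fin 3) (Y1 Y2 X : Finset α) : Prop :=
  i ≠ j ∧ i ≠ k ∧ j ≠ k ∧
  Y1.Nonempty ∧ Y2.Nonempty ∧ X.Nonempty ∧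
  Y1 ⊆ H.cls i ∧ Y2 ⊆ H.cls j ∧ X ⊆ H.cls k ∧
  Y1.card = Y2.card ∧ Y1.card ≤ X.card ∧
  nbr H j k X = Y2 ∧
  (∃ M : Finset (α × α × α), H.IsMatching M ∧ M.card = Y1.card ∧
    ∀ e ∈ M, evset e ⊆ Y1 ∪ Y2 ∪ X) ∧
  IsHomeBase (H.delete (Y1 ∪ Y2 ∪ X)) ∧
  (H.delete (Y1 ∪ Y2 ∪ X)).nu + Y1.card = H.nu ∧
  ∀ P : FRData α, IsHomeBasePartition (H.delete (Y1 ∪ Y2 ∪ X)) P →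
    nbr H i k X ⊆ Y1 ∪ famUnion P.Rfam ∪ famUnion P.Ffam

/-- A perfectly cromulent triple: condition (5) is strengthened to
`N_{Lk_{V_j}}(X) = Y1`. -/
def IsPerfCromulent (H : TriSys α) (i j k : Fin 3) (Y1 Y2 X : Finset α) : Prop :=
  i ≠ j ∧ i ≠ k ∧ j ≠ k ∧
  Y1.Nonempty ∧ Y2.Nonempty ∧ X.Nonempty ∧
  Y1 ⊆ H.cls i ∧ Y2 ⊆ H.cls j ∧ X ⊆ H.cls k ∧
  Y1.card = Y2.card ∧ Y1.card ≤ X.card ∧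
  nbr H j k X = Y2 ∧
  (∃ M : Finset (α × α × α), H.IsMatching M ∧ M.card = Y1.card ∧
    ∀ e ∈ M, evset e ⊆ Y1 ∪ Y2 ∪ X) ∧
  IsHomeBase (H.delete (Y1 ∪ Y2 ∪ X)) ∧
  (H.delete (Y1 ∪ Y2 ∪ X)).nu + Y1.card = H.nu ∧
  nbr H i k X = Y1

/-- The link graph of `H` over the class other than `j, k` has a perfect
matching, encoded as a bijection from class `j` onto class `k` realized by
edges of `H`. -/
def LinkPerfectMatching (H : TriSys α) (j k : Fin 3) : Prop :=
  ∃ f : α → α, Set.InjOn f ↑(H.cls j) ∧ (H.cls j).image f = H.cls k ∧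
    ∀ v ∈ H.cls j, ∃ e ∈ H.edges, ecoord e j = v ∧ ecoord e k = f v

/-- A proper FR-partition: no `R ∈ 𝓡` together with an edge consisting of
three `W`-vertices induces a truncated (multi-)Fano plane. -/
def IsProper (H : TriSys α) (P : FRData α) : Prop :=
  ¬ ∃ R ∈ P.Rfam, ∃ e ∈ H.edges, evset e ⊆ P.W ∧ IsMultiFano H (R ∪ evset e)

section Aux

/-- Any cover must contain at least two vertices of a multi-Fano block. -/
lemma fano_two (H : TriSys α) {T F : Finset α} (hcov : H.IsCover T)
    (hF : IsMultiFano H F) : 2 ≤ (T ∩ F).card := by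
  obtain ⟨a, b, c, x, y, z, ha, hx, hb, hy, hc, hz, hax, hby, hcz, hFeq, hind⟩ := hF
  have d12 : ∀ {u v : α}, u ∈ H.V1 → v ∈ H.V2 → u ≠ v :=
    fun hu hv huv => Finset.disjoint_left.mp H.h12 hu (huv ▸ hv)
  have d13 : ∀ {u v : α}, u ∈ H.V1 → v ∈ H.V3 → u ≠ v :=
    fun hu hv huv => Finset.disjoint_left.mp H.h13 hu (huv ▸ hv)
  have d23 : ∀ {u v : α}, u ∈ H.V2 → v ∈ H.V3 → u ≠ v :=
    fun hu hv huv => Finset.disjoint_left.mp H.h23 hu (huv ▸ hv)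
  have hmem : ∀ e ∈ FanoEdges a b c x y z, e ∈ H.edges ∧ evset e ⊆ F := by
    intro e he
    rw [← hind] at he
    simpa [inducedEdges, Multiset.mem_filter] using he
  have he1 := hmem (a, b, c) (by simp [FanoEdges])
  have he2 := hmem (a, y, z) (by simp [FanoEdges])
  have he3 := hmem (x, b, z) (by simp [FanoEdges])
  obtain ⟨v1, hv1T, hv1⟩ := hcov _ he1.1
  obtain ⟨v2, hv2T, hv2⟩ := hcov _ he2.1
  obtain ⟨v3, hv3T, hv3⟩ := hcov _ he3.1
  by_contra hlt
  push_neg at hlt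
  have hone := Finset.card_le_one.mp (Nat.lt_succ_iff.mp hlt)
  have m1 : v1 ∈ T ∩ F := Finset.mem_inter.mpr ⟨hv1T, he1.2 hv1⟩
  have m2 : v2 ∈ T ∩ F := Finset.mem_inter.mpr ⟨hv2T, he2.2 hv2⟩
  have m3 : v3 ∈ T ∩ F := Finset.mem_inter.mpr ⟨hv3T, he3.2 hv3⟩
  have e12 : v2 = v1 := hone _ m2 _ m1
  have e13 : v3 = v1 := hone _ m3 _ m1
  rw [e12] at hv2
  rw [e13] at hv3
  simp only [evset, Finset.mem_insert, Finset.mem_singleton] at hv1 hv2 hv3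
  rcases hv1 with h | h | h
  · subst h
    rcases hv3 with h | h | h
    · exact hax h
    · exact d12 ha hb h
    · exact d13 ha hz h
  · subst h
    rcases hv2 with h | h | h
    · exact (d12 ha hb h.symm)
    · exact hby h
    · exact d23 hb hz h
  · subst h
    rcases hv2 with h | h | h
    · exact (d13 ha hc h.symm)
    · exact (d23 hy hc h.symm)
    · exact hcz h

lemma radj1 (H : TriSys α) {R W : Finset α} {w r1 r2 r3 : α}
    (hRW : Disjoint R W) (hr1 : r1 ∈ H.V1) (hr2 : r2 ∈ H.V2) (hr3 : r3 ∈ H.V3)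
    (hR : R = {r1, r2, r3}) (hw : w ∈ W) (hwV : w ∈ H.V1)
    (h : RAdj H R w) : ∃ e ∈ H.edges, evset e = {w, r2, r3} := by
  obtain ⟨e, he, hwe, hcard⟩ := h
  refine ⟨e, he, ?_⟩
  have h1 := H.mem1 e he; have h2 := H.mem2 e he; have h3 := H.mem3 e he
  have hwe' : w = e.1 := by
    have hm : w = e.1 ∨ w = e.2.1 ∨ w = e.2.2 := by simpa [evset] using hwe
    rcases hm with h | h | h
    · exact h
    · exact absurd (h ▸ h2) (Finset.disjoint_left.mp H.h12 hwV)
    · exact absurd (h ▸ h3) (Finset.disjoint_left.mp H.h13 hwV)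
  have h1R : e.1 ∉ R := by
    rw [← hwe']; exact fun hc => Finset.disjoint_left.mp hRW hc hw
  have hsub : evset e ∩ R ⊆ ({e.2.1, e.2.2} : Finset α) := by
    intro u hu
    rw [Finset.mem_inter] at hu
    have hm : u = e.1 ∨ u = e.2.1 ∨ u = e.2.2 := by simpa [evset] using hu.1
    rcases hm with h | h | h
    · exact absurd (h ▸ hu.2) h1R
    · simp [h]
    · simp [h]
  have heq : evset e ∩ R = {e.2.1, e.2.2} := by
    apply Finset.eq_of_subset_of_card_le hsub
    exact le_trans (le_trans (Finset.card_insert_le _ _) (by simp)) hcard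
  have h2R : e.2.1 ∈ R := by
    have : e.2.1 ∈ evset e ∩ R := heq ▸ (by simp)
    exact (Finset.mem_inter.mp this).2
  have h3R : e.2.2 ∈ R := by
    have : e.2.2 ∈ evset e ∩ R := heq ▸ (by simp)
    exact (Finset.mem_inter.mp this).2
  have h2r : e.2.1 = r2 := by
    have hm : e.2.1 = r1 ∨ e.2.1 = r2 ∨ e.2.1 = r3 := by simpa [hR] using h2R
    rcases hm with h | h | h
    · exact absurd (h ▸ hr1) (Finset.disjoint_left.mp H.h12.symm h2)
    · exact h
    · exact absurd (h ▸ hr3) (Finset.disjoint_left.mp H.h23 h2)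
  have h3r : e.2.2 = r3 := by
    have hm : e.2.2 = r1 ∨ e.2.2 = r2 ∨ e.2.2 = r3 := by simpa [hR] using h3R
    rcases hm with h | h | h
    · exact absurd (h ▸ hr1) (Finset.disjoint_left.mp H.h13.symm h3)
    · exact absurd (h ▸ hr2) (Finset.disjoint_left.mp H.h23.symm h3)
    · exact h
  rw [evset, ← hwe', h2r, h3r]

lemma radj2 (H : TriSys α) {R W : Finset α} {w r1 r2 r3 : α}
    (hRW : Disjoint R W) (hr1 : r1 ∈ H.V1) (hr2 : r2 ∈ H.V2) (hr3 : r3 ∈ H.V3)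
    (hR : R = {r1, r2, r3}) (hw : w ∈ W) (hwV : w ∈ H.V2)
    (h : RAdj H R w) : ∃ e ∈ H.edges, evset e = {r1, w, r3} := by
  obtain ⟨e, he, hwe, hcard⟩ := h
  refine ⟨e, he, ?_⟩
  have h1 := H.mem1 e he; have h2 := H.mem2 e he; have h3 := H.mem3 e he
  have hwe' : w = e.2.1 := by
    have hm : w = e.1 ∨ w = e.2.1 ∨ w = e.2.2 := by simpa [evset] using hwe
    rcases hm with h | h | h
    · exact absurd (h ▸ h1) (Finset.disjoint_left.mp H.h12.symm hwV)
    · exact h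
    · exact absurd (h ▸ h3) (Finset.disjoint_left.mp H.h23 hwV)
  have h2nR : e.2.1 ∉ R := by
    rw [← hwe']; exact fun hc => Finset.disjoint_left.mp hRW hc hw
  have hsub : evset e ∩ R ⊆ ({e.1, e.2.2} : Finset α) := by
    intro u hu
    rw [Finset.mem_inter] at hu
    have hm : u = e.1 ∨ u = e.2.1 ∨ u = e.2.2 := by simpa [evset] using hu.1
    rcases hm with h | h | h
    · simp [h]
    · exact absurd (h ▸ hu.2) h2nR
    · simp [h]
  have heq : evset e ∩ R = {e.1, e.2.2} := by
    apply Finset.eq_of_subset_of_card_le hsub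
    exact le_trans (le_trans (Finset.card_insert_le _ _) (by simp)) hcard
  have h1R : e.1 ∈ R := by
    have : e.1 ∈ evset e ∩ R := heq ▸ (by simp)
    exact (Finset.mem_inter.mp this).2
  have h3R : e.2.2 ∈ R := by
    have : e.2.2 ∈ evset e ∩ R := heq ▸ (by simp)
    exact (Finset.mem_inter.mp this).2
  have h1r : e.1 = r1 := by
    have hm : e.1 = r1 ∨ e.1 = r2 ∨ e.1 = r3 := by simpa [hR] using h1R
    rcases hm with h | h | h
    · exact h
    · exact absurd (h ▸ hr2) (Finset.disjoint_left.mp H.h12 h1)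
    · exact absurd (h ▸ hr3) (Finset.disjoint_left.mp H.h13 h1)
  have h3r : e.2.2 = r3 := by
    have hm : e.2.2 = r1 ∨ e.2.2 = r2 ∨ e.2.2 = r3 := by simpa [hR] using h3R
    rcases hm with h | h | h
    · exact absurd (h ▸ hr1) (Finset.disjoint_left.mp H.h13.symm h3)
    · exact absurd (h ▸ hr2) (Finset.disjoint_left.mp H.h23.symm h3)
    · exact h
  rw [evset, ← hwe', h1r, h3r]

lemma radj3 (H : TriSys α) {R W : Finset α} {w r1 r2 r3 : α}
    (hRW : Disjoint R W) (hr1 : r1 ∈ H.V1) (hr2 : r2 ∈ H.V2) (hr3 : r3 ∈ H.V3)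
    (hR : R = {r1, r2, r3}) (hw : w ∈ W) (hwV : w ∈ H.V3)
    (h : RAdj H R w) : ∃ e ∈ H.edges, evset e = {r1, r2, w} := by
  obtain ⟨e, he, hwe, hcard⟩ := h
  refine ⟨e, he, ?_⟩
  have h1 := H.mem1 e he; have h2 := H.mem2 e he; have h3 := H.mem3 e he
  have hwe' : w = e.2.2 := by
    have hm : w = e.1 ∨ w = e.2.1 ∨ w = e.2.2 := by simpa [evset] using hwe
    rcases hm with h | h | h
    · exact absurd (h ▸ h1) (Finset.disjoint_left.mp H.h13.symm hwV)
    · exact absurd (h ▸ h2) (Finset.disjoint_left.mp H.h23.symm hwV)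
    · exact h
  have h3nR : e.2.2 ∉ R := by
    rw [← hwe']; exact fun hc => Finset.disjoint_left.mp hRW hc hw
  have hsub : evset e ∩ R ⊆ ({e.1, e.2.1} : Finset α) := by
    intro u hu
    rw [Finset.mem_inter] at hu
    have hm : u = e.1 ∨ u = e.2.1 ∨ u = e.2.2 := by simpa [evset] using hu.1
    rcases hm with h | h | h
    · simp [h]
    · simp [h]
    · exact absurd (h ▸ hu.2) h3nR
  have heq : evset e ∩ R = {e.1, e.2.1} := by
    apply Finset.eq_of_subset_of_card_le hsub
    exact le_trans (le_trans (Finset.card_insert_le _ _) (by simp)) hcard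
  have h1R : e.1 ∈ R := by
    have : e.1 ∈ evset e ∩ R := heq ▸ (by simp)
    exact (Finset.mem_inter.mp this).2
  have h2R : e.2.1 ∈ R := by
    have : e.2.1 ∈ evset e ∩ R := heq ▸ (by simp)
    exact (Finset.mem_inter.mp this).2
  have h1r : e.1 = r1 := by
    have hm : e.1 = r1 ∨ e.1 = r2 ∨ e.1 = r3 := by simpa [hR] using h1R
    rcases hm with h | h | h
    · exact h
    · exact absurd (h ▸ hr2) (Finset.disjoint_left.mp H.h12 h1)
    · exact absurd (h ▸ hr3) (Finset.disjoint_left.mp H.h13 h1)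
  have h2r : e.2.1 = r2 := by
    have hm : e.2.1 = r1 ∨ e.2.1 = r2 ∨ e.2.1 = r3 := by simpa [hR] using h2R
    rcases hm with h | h | h
    · exact absurd (h ▸ hr1) (Finset.disjoint_left.mp H.h12.symm h2)
    · exact h
    · exact absurd (h ▸ hr3) (Finset.disjoint_left.mp H.h23 h2)
  rw [evset, ← hwe', h1r, h2r]

/-- Any cover must contain at least two vertices in `R` together with its
matched `W`-vertices. -/
lemma R_two (H : TriSys α) {T R W : Finset α} (hcov : H.IsCover T)
    (hRW : Disjoint R W) {r1 r2 r3 w1 w2 w3 : α}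
    (hr1 : r1 ∈ H.V1) (hr2 : r2 ∈ H.V2) (hr3 : r3 ∈ H.V3) (hR : R = {r1, r2, r3})
    (hw1 : w1 ∈ W) (hw1V : w1 ∈ H.V1) (hw2 : w2 ∈ W) (hw2V : w2 ∈ H.V2)
    (hw3 : w3 ∈ W) (hw3V : w3 ∈ H.V3)
    (ha1 : RAdj H R w1) (ha2 : RAdj H R w2) (ha3 : RAdj H R w3) :
    2 ≤ (T ∩ (R ∪ {w1, w2, w3})).card := by
  obtain ⟨e1, he1, hev1⟩ := radj1 H hRW hr1 hr2 hr3 hR hw1 hw1V ha1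
  obtain ⟨e2, he2, hev2⟩ := radj2 H hRW hr1 hr2 hr3 hR hw2 hw2V ha2
  obtain ⟨e3, he3, hev3⟩ := radj3 H hRW hr1 hr2 hr3 hR hw3 hw3V ha3
  obtain ⟨v1, hv1T, hv1⟩ := hcov _ he1
  obtain ⟨v2, hv2T, hv2⟩ := hcov _ he2
  obtain ⟨v3, hv3T, hv3⟩ := hcov _ he3
  have s1 : evset e1 ⊆ R ∪ ({w1, w2, w3} : Finset α) := by
    rw [hev1, hR]; intro u hu; simp only [Finset.mem_insert, Finset.mem_singleton] at hu
    simp only [Finset.mem_union, Finset.mem_insert, Finset.mem_singleton]; tauto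
  have s2 : evset e2 ⊆ R ∪ ({w1, w2, w3} : Finset α) := by
    rw [hev2, hR]; intro u hu; simp only [Finset.mem_insert, Finset.mem_singleton] at hu
    simp only [Finset.mem_union, Finset.mem_insert, Finset.mem_singleton]; tauto
  have s3 : evset e3 ⊆ R ∪ ({w1, w2, w3} : Finset α) := by
    rw [hev3, hR]; intro u hu; simp only [Finset.mem_insert, Finset.mem_singleton] at hu
    simp only [Finset.mem_union, Finset.mem_insert, Finset.mem_singleton]; tauto
  by_contra hlt
  push_neg at hlt
  have hone := Finset.card_le_one.mp (Nat.lt_succ_iff.mp hlt)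
  have m1 : v1 ∈ T ∩ (R ∪ {w1, w2, w3}) := Finset.mem_inter.mpr ⟨hv1T, s1 hv1⟩
  have m2 : v2 ∈ T ∩ (R ∪ {w1, w2, w3}) := Finset.mem_inter.mpr ⟨hv2T, s2 hv2⟩
  have m3 : v3 ∈ T ∩ (R ∪ {w1, w2, w3}) := Finset.mem_inter.mpr ⟨hv3T, s3 hv3⟩
  have e12 : v2 = v1 := hone _ m2 _ m1
  have e13 : v3 = v1 := hone _ m3 _ m1
  rw [hev1] at hv1
  rw [hev2, e12] at hv2
  rw [hev3, e13] at hv3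
  simp only [Finset.mem_insert, Finset.mem_singleton] at hv1 hv2 hv3
  have hr1R : r1 ∈ R := by simp [hR]
  have hr2R : r2 ∈ R := by simp [hR]
  have hr3R : r3 ∈ R := by simp [hR]
  have hW : ∀ {u v : α}, u ∈ R → v ∈ W → u ≠ v :=
    fun hu hv huv => Finset.disjoint_left.mp hRW hu (huv ▸ hv)
  have d12 : ∀ {u v : α}, u ∈ H.V1 → v ∈ H.V2 → u ≠ v :=
    fun hu hv huv => Finset.disjoint_left.mp H.h12 hu (huv ▸ hv)
  have d13 : ∀ {u v : α}, u ∈ H.V1 → v ∈ H.V3 → u ≠ v :=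
    fun hu hv huv => Finset.disjoint_left.mp H.h13 hu (huv ▸ hv)
  have d23 : ∀ {u v : α}, u ∈ H.V2 → v ∈ H.V3 → u ≠ v :=
    fun hu hv huv => Finset.disjoint_left.mp H.h23 hu (huv ▸ hv)
  rcases hv1 with h | h | h
  · subst h
    rcases hv2 with h | h | h
    · exact hW hr1R hw1 h.symm
    · exact d12 hw1V hw2V h
    · exact hW hr3R hw1 h.symm
  · subst h
    rcases hv2 with h | h | h
    · exact d12 hr1 hr2 h.symm
    · exact hW hr2R hw2 h
    · exact d23 hr2 hr3 h
  · subst h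
    rcases hv3 with h | h | h
    · exact d13 hr1 hr3 h.symm
    · exact d23 hr2 hr3 h.symm
    · exact hW hr3R hw3 h

lemma cover_ge (H : TriSys α) (P : FRData α) (hP : IsHomeBasePartition H P)
    {T : Finset α} (hcov : H.IsCover T) : 2 * H.nu ≤ T.card := by
  obtain ⟨⟨hF, hR, hFR, hFW, hRW, hU, hFano, hRstr, hnu⟩, hmatch, hhome⟩ := hP
  obtain ⟨f1, hf1inj, hf1⟩ := hmatch 0
  obtain ⟨f2, hf2inj, hf2⟩ := hmatch 1
  obtain ⟨f3, hf3inj, hf3⟩ := hmatch 2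
  have c0 : H.cls 0 = H.V1 := rfl
  have c1 : H.cls 1 = H.V2 := rfl
  have c2 : H.cls 2 = H.V3 := rfl
  have hw1 : ∀ C ∈ P.Rfam, f1 C ∈ P.W ∧ f1 C ∈ H.V1 := by
    intro C hC
    have := (hf1 C hC).1
    rw [c0, Finset.mem_inter] at this
    exact this
  have hw2 : ∀ C ∈ P.Rfam, f2 C ∈ P.W ∧ f2 C ∈ H.V2 := by
    intro C hC
    have := (hf2 C hC).1
    rw [c1, Finset.mem_inter] at this
    exact this
  have hw3 : ∀ C ∈ P.Rfam, f3 C ∈ P.W ∧ f3 C ∈ H.V3 := by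
    intro C hC
    have := (hf3 C hC).1
    rw [c2, Finset.mem_inter] at this
    exact this
  classical
  set g : Finset α → Finset α :=
    fun A => if A ∈ P.Ffam then A else A ∪ {f1 A, f2 A, f3 A} with hg
  have hFRdisj : Disjoint P.Ffam P.Rfam := by
    rw [Finset.disjoint_left]
    intro A hAF hAR
    obtain ⟨a, b, c, x, y, z, _, _, _, _, _, _, _, _, _, hFeq, _⟩ := hFano A hAF
    have haA : a ∈ A := by simp [hFeq]
    exact Finset.disjoint_left.mp (hFR A hAF A hAR) haA haA
  have hgF : ∀ A ∈ P.Ffam, g A = A := by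
    intro A hA; simp only [hg, if_pos hA]
  have hgR : ∀ A ∈ P.Rfam, g A = A ∪ {f1 A, f2 A, f3 A} := by
    intro A hA
    have : A ∉ P.Ffam := fun h => Finset.disjoint_left.mp hFRdisj h hA
    simp only [hg, if_neg this]
  have hkey : ∀ A ∈ P.Ffam ∪ P.Rfam, 2 ≤ (T ∩ g A).card := by
    intro A hA
    rcases Finset.mem_union.mp hA with hA | hA
    · rw [hgF A hA]
      exact fano_two H hcov (hFano A hA)
    · rw [hgR A hA]
      obtain ⟨r1, hr1, r2, hr2, r3, hr3, hReq⟩ := hRstr A hA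
      exact R_two H hcov (hRW A hA) hr1 hr2 hr3 hReq
        (hw1 A hA).1 (hw1 A hA).2 (hw2 A hA).1 (hw2 A hA).2
        (hw3 A hA).1 (hw3 A hA).2 (hf1 A hA).2 (hf2 A hA).2 (hf3 A hA).2
  have hwmem : ∀ A ∈ P.Rfam, ∀ u ∈ ({f1 A, f2 A, f3 A} : Finset α), u ∈ P.W := by
    intro A hA u hu
    simp only [Finset.mem_insert, Finset.mem_singleton] at hu
    rcases hu with h | h | h
    · exact h ▸ (hw1 A hA).1
    · exact h ▸ (hw2 A hA).1
    · exact h ▸ (hw3 A hA).1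
  have hFgR : ∀ A ∈ P.Ffam, ∀ B ∈ P.Rfam, Disjoint A (g B) := by
    intro A hA B hB
    rw [hgR B hB, Finset.disjoint_union_right]
    refine ⟨hFR A hA B hB, ?_⟩
    rw [Finset.disjoint_right]
    intro u hu huA
    exact Finset.disjoint_left.mp (hFW A hA) huA (hwmem B hB u hu)
  have hgdisj : ∀ A ∈ P.Ffam ∪ P.Rfam, ∀ B ∈ P.Ffam ∪ P.Rfam, A ≠ B →
      Disjoint (g A) (g B) := by
    intro A hA B hB hne
    rcases Finset.mem_union.mp hA with hA | hA <;>
      rcases Finset.mem_union.mp hB with hB | hB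
    · rw [hgF A hA, hgF B hB]; exact hF A hA B hB hne
    · rw [hgF A hA]; exact hFgR A hA B hB
    · rw [hgF B hB]; exact (hFgR B hB A hA).symm
    · rw [hgR A hA, hgR B hB, Finset.disjoint_left]
      intro u hu hu'
      have hAW := hRW A hA
      have hBW := hRW B hB
      rcases Finset.mem_union.mp hu with hu | hu <;>
        rcases Finset.mem_union.mp hu' with hu' | hu'
      · exact Finset.disjoint_left.mp (hR A hA B hB hne) hu hu'
      · exact Finset.disjoint_left.mp hAW hu (hwmem B hB u hu')
      · exact Finset.disjoint_left.mp hBW hu' (hwmem A hA u hu)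
      · simp only [Finset.mem_insert, Finset.mem_singleton] at hu hu'
        have dV : ∀ {p q : α}, p ∈ H.V1 → q ∈ H.V2 → p ≠ q :=
          fun hp hq hpq => Finset.disjoint_left.mp H.h12 hp (hpq ▸ hq)
        have dV13 : ∀ {p q : α}, p ∈ H.V1 → q ∈ H.V3 → p ≠ q :=
          fun hp hq hpq => Finset.disjoint_left.mp H.h13 hp (hpq ▸ hq)
        have dV23 : ∀ {p q : α}, p ∈ H.V2 → q ∈ H.V3 → p ≠ q :=
          fun hp hq hpq => Finset.disjoint_left.mp H.h23 hp (hpq ▸ hq)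
        rcases hu with h | h | h <;> rcases hu' with h' | h' | h'
        · exact hne (hf1inj hA hB (h.symm.trans h'))
        · exact dV (hw1 A hA).2 (hw2 B hB).2 (h.symm.trans h')
        · exact dV13 (hw1 A hA).2 (hw3 B hB).2 (h.symm.trans h')
        · exact dV (hw1 B hB).2 (hw2 A hA).2 (h'.symm.trans h)
        · exact hne (hf2inj hA hB (h.symm.trans h'))
        · exact dV23 (hw2 A hA).2 (hw3 B hB).2 (h.symm.trans h')
        · exact dV13 (hw1 B hB).2 (hw3 A hA).2 (h'.symm.trans h)
        · exact dV23 (hw2 B hB).2 (hw3 A hA).2 (h'.symm.trans h)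
        · exact hne (hf3inj hA hB (h.symm.trans h'))
  have hdisj : ∀ A ∈ P.Ffam ∪ P.Rfam, ∀ B ∈ P.Ffam ∪ P.Rfam, A ≠ B →
      Disjoint (T ∩ g A) (T ∩ g B) := by
    intro A hA B hB hne
    exact (hgdisj A hA B hB hne).mono Finset.inter_subset_right
      Finset.inter_subset_right
  calc 2 * H.nu = ∑ _A ∈ (P.Ffam ∪ P.Rfam), 2 := by
        rw [Finset.sum_const, smul_eq_mul,
          Finset.card_union_of_disjoint hFRdisj, hnu, mul_comm]
    _ ≤ ∑ A ∈ (P.Ffam ∪ P.Rfam), (T ∩ g A).card := Finset.sum_le_sum hkey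
    _ = ((P.Ffam ∪ P.Rfam).biUnion fun A => T ∩ g A).card :=
        (Finset.card_biUnion hdisj).symm
    _ ≤ T.card := by
        apply Finset.card_le_card
        intro u hu
        rw [Finset.mem_biUnion] at hu
        obtain ⟨A, hA, huA⟩ := hu
        exact (Finset.mem_inter.mp huA).1

end Aux

/-- If a 3-partite 3-graph `H` has a home-base partition, then
`τ(H) = 2ν(H)`.  (Ryser's Conjecture for 3-partite 3-graphs, i.e. Aharoni's
theorem `τ ≤ 2ν`, may be assumed.) -/
theorem homeBasePartition_tau_eq_two_nu (H : TriSys α) (P : FRData α)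
    (hP : IsHomeBasePartition H P)
    (hRyser : ∀ H' : TriSys α, H'.tau ≤ 2 * H'.nu) :
    H.tau = 2 * H.nu := by
  refine le_antisymm (hRyser H) ?_
  have hvc : H.IsCover H.verts := by
    intro e he
    refine ⟨e.1, ?_, by simp [evset]⟩
    exact Finset.mem_union.mpr (Or.inl (Finset.mem_union.mpr (Or.inl (H.mem1 e he))))
  have hne : {n : ℕ | ∃ T : Finset α, H.IsCover T ∧ T.card = n}.Nonempty :=
    ⟨H.verts.card, H.verts, hvc, rfl⟩
  obtain ⟨T, hT, hTc⟩ := Nat.sInf_mem hne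
  rw [TriSys.tau, ← hTc]
  exact cover_ge H P hP hT
end
end

section
/- Let B be a bipartite graph with parts 𝓡 and W that has a matching saturating 𝓡. Then the union of any two essential subsets of W is essential; consequently W contains a unique maximal essential subset, namely the union of all essential subsets of W. -/
noncomputable section

attribute [local instance] Classical.propDecidable

variable {ρ ω : Type*}

/-- The neighborhood of a set `U` of left vertices in the bipartite graph
with edge set `E`. -/
def bNbhd (E : Finset (ρ × ω)) (U : Finset ρ) : Finset ω :=
  (E.filter fun p => p.1 ∈ U).image Prod.snd

/-- `C` is an essential subset of the right side: `C = N(U)` for some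
`U ⊆ Rset` with `|U| = |C|`. -/
def bEssential (Rset : Finset ρ) (E : Finset (ρ × ω)) (C : Finset ω) : Prop :=
  ∃ U ⊆ Rset, U.card = C.card ∧ bNbhd E U = C

/-- The bipartite graph with edge set `E` has a matching saturating `Rset`. -/
def SaturatesR (Rset : Finset ρ) (E : Finset (ρ × ω)) : Prop :=
  ∃ f : ρ → ω, Set.InjOn f ↑Rset ∧ ∀ r ∈ Rset, (r, f r) ∈ E

lemma bNbhd_empty (E : Finset (ρ × ω)) : bNbhd E (∅ : Finset ρ) = ∅ := by
  simp [bNbhd]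

lemma bNbhd_mono (E : Finset (ρ × ω)) {U V : Finset ρ} (h : U ⊆ V) :
    bNbhd E U ⊆ bNbhd E V := by
  apply Finset.image_subset_image
  intro p hp
  rw [Finset.mem_filter] at hp ⊢
  exact ⟨hp.1, h hp.2⟩

lemma bNbhd_union (E : Finset (ρ × ω)) (U V : Finset ρ) :
    bNbhd E (U ∪ V) = bNbhd E U ∪ bNbhd E V := by
  unfold bNbhd
  rw [← Finset.image_union, ← Finset.filter_or]
  congr 1
  ext p
  simp [Finset.mem_union]

lemma hall_ineq (Rset : Finset ρ) (E : Finset (ρ × ω))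
    (hsat : SaturatesR Rset E) {S : Finset ρ} (hS : S ⊆ Rset) :
    S.card ≤ (bNbhd E S).card := by
  obtain ⟨f, hinj, hf⟩ := hsat
  have h1 : S.image f ⊆ bNbhd E S := by
    intro w hw
    simp only [Finset.mem_image] at hw
    obtain ⟨r, hr, rfl⟩ := hw
    simp only [bNbhd, Finset.mem_image]
    exact ⟨(r, f r), Finset.mem_filter.2 ⟨hf r (hS hr), hr⟩, rfl⟩
  calc S.card = (S.image f).card := (Finset.card_image_of_injOn
        (hinj.mono (by exact_mod_cast hS))).symm
    _ ≤ _ := Finset.card_le_card h1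

lemma essential_union (Rset : Finset ρ) (E : Finset (ρ × ω))
    (hsat : SaturatesR Rset E) (C1 C2 : Finset ω)
    (h1 : bEssential Rset E C1) (h2 : bEssential Rset E C2) :
    bEssential Rset E (C1 ∪ C2) := by
  obtain ⟨U1, hU1R, hU1c, hU1n⟩ := h1
  obtain ⟨U2, hU2R, hU2c, hU2n⟩ := h2
  refine ⟨U1 ∪ U2, Finset.union_subset hU1R hU2R, ?_, ?_⟩
  · have hNU : bNbhd E (U1 ∪ U2) = C1 ∪ C2 := by
      rw [bNbhd_union, hU1n, hU2n]
    have hle : (U1 ∪ U2).card ≤ (C1 ∪ C2).card := by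
      have := hall_ineq Rset E hsat (Finset.union_subset hU1R hU2R)
      rwa [hNU] at this
    have hint : (U1 ∩ U2).card ≤ (C1 ∩ C2).card := by
      have h := hall_ineq Rset E hsat (S := U1 ∩ U2)
        ((Finset.inter_subset_left).trans hU1R)
      refine h.trans (Finset.card_le_card ?_)
      intro w hw
      have hi1 := bNbhd_mono E (Finset.inter_subset_left (s₁ := U1) (s₂ := U2)) hw
      have hi2 := bNbhd_mono E (Finset.inter_subset_right (s₁ := U1) (s₂ := U2)) hw
      rw [hU1n] at hi1; rw [hU2n] at hi2
      exact Finset.mem_inter.2 ⟨hi1, hi2⟩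
    have e1 := Finset.card_union_add_card_inter U1 U2
    have e2 := Finset.card_union_add_card_inter C1 C2
    omega
  · rw [bNbhd_union, hU1n, hU2n]

lemma essential_sup (Rset : Finset ρ) (E : Finset (ρ × ω))
    (hsat : SaturatesR Rset E) (s : Finset (Finset ω))
    (h : ∀ C ∈ s, bEssential Rset E C) :
    bEssential Rset E (s.sup id) := by
  induction s using Finset.induction_on with
  | empty => exact ⟨∅, Finset.empty_subset _, by simp [bNbhd_empty], by simp [bNbhd_empty]⟩
  | insert C s' hni ih =>
    rw [Finset.sup_insert]
    exact essential_union Rset E hsat _ _ (h C (Finset.mem_insert_self _ _))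
      (ih fun D hD => h D (Finset.mem_insert_of_mem hD))

/-- In a bipartite graph with parts `Rset` and `Wset` having a matching
saturating `Rset`, the union of two essential subsets of `Wset` is essential;
consequently there is a unique maximal essential subset, namely the union of
all essential subsets. -/
theorem union_essential_and_unique_maximal
    (Rset : Finset ρ) (Wset : Finset ω) (E : Finset (ρ × ω))
    (hE : ∀ p ∈ E, p.1 ∈ Rset ∧ p.2 ∈ Wset)
    (hsat : SaturatesR Rset E) :
    (∀ C1 C2 : Finset ω, bEssential Rset E C1 → bEssential Rset E C2 →
      bEssential Rset E (C1 ∪ C2)) ∧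
    (∃! Cm : Finset ω, bEssential Rset E Cm ∧
      ∀ C, bEssential Rset E C → C ⊆ Cm) ∧
    (∀ Cm : Finset ω,
      (bEssential Rset E Cm ∧ ∀ C, bEssential Rset E C → C ⊆ Cm) →
      ∀ w, w ∈ Cm ↔ ∃ C, bEssential Rset E C ∧ w ∈ C) := by
  have hsubW : ∀ C, bEssential Rset E C → C ⊆ Wset := by
    rintro C ⟨U, hUR, hc, rfl⟩
    intro w hw
    simp only [bNbhd, Finset.mem_image] at hw
    obtain ⟨p, hp, rfl⟩ := hw
    exact (hE p (Finset.mem_filter.1 hp).1).2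
  set S := Wset.powerset.filter (bEssential Rset E) with hS
  set Cm := S.sup id with hCm
  have hCmEss : bEssential Rset E Cm :=
    essential_sup Rset E hsat S (fun C hC => (Finset.mem_filter.1 hC).2)
  have hCmMax : ∀ C, bEssential Rset E C → C ⊆ Cm := by
    intro C hC
    have : C ∈ S := Finset.mem_filter.2 ⟨Finset.mem_powerset.2 (hsubW C hC), hC⟩
    exact Finset.le_sup (f := id) this
  refine ⟨fun C1 C2 => essential_union Rset E hsat C1 C2,
    ⟨Cm, ⟨hCmEss, hCmMax⟩, ?_⟩, ?_⟩
  · rintro D ⟨hDE, hDM⟩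
    exact Finset.Subset.antisymm (hCmMax D hDE) (hDM Cm hCmEss)
  · rintro D ⟨hDE, hDM⟩ w
    constructor
    · intro hw; exact ⟨D, hDE, hw⟩
    · rintro ⟨C, hCE, hwC⟩; exact hDM C hCE hwC
end
end

section
/- Let H be a 3-partite 3-graph with a matchable FR-partition (𝓕, 𝓡, W), and let S ⊆ W be a set of superfluous vertices containing at most one vertex from each vertex class. Then (𝓕, 𝓡, W \ S) is a matchable FR-partition of the hypergraph H − S obtained by deleting the vertices of S (in particular, ν(H − S) = ν(H)). -/
noncomputable section

attribute [local instance] Classical.propDecidable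

universe u

variable {α : Type u}

section Helpers

lemma mem_evset_fst (e : α × α × α) : e.1 ∈ evset e := by simp [evset]

lemma card_evset (H : TriSys α) {e : α × α × α} (he : e ∈ H.edges) :
    (evset e).card = 3 := by
  have h1 : e.1 ∈ H.V1 := H.mem1 e he
  have h2 : e.2.1 ∈ H.V2 := H.mem2 e he
  have h3 : e.2.2 ∈ H.V3 := H.mem3 e he
  refine Finset.card_eq_three.mpr ⟨e.1, e.2.1, e.2.2, ?_, ?_, ?_, rfl⟩
  · intro h; exact Finset.disjoint_left.mp H.h12 h1 (h ▸ h2)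
  · intro h; exact Finset.disjoint_left.mp H.h13 h1 (h ▸ h3)
  · intro h; exact Finset.disjoint_left.mp H.h23 h2 (h ▸ h3)

lemma cls_disjoint (H : TriSys α) {i j : Fin 3} (hij : i ≠ j) :
    Disjoint (H.cls i) (H.cls j) := by
  fin_cases i <;> fin_cases j <;> simp_all [TriSys.cls] <;>
    first
      | exact H.h12 | exact H.h13 | exact H.h23
      | exact H.h12.symm | exact H.h13.symm | exact H.h23.symm

lemma matching_card_le (H : TriSys α) {M : Finset (α × α × α)}
    (hM : H.IsMatching M) : M.card ≤ H.V1.card := by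
  classical
  have hinj : Set.InjOn (fun e : α × α × α => e.1) ↑M := by
    intro e he f hf hef
    by_contra hne
    have hd := hM.2 he hf hne
    exact Finset.disjoint_left.mp hd (mem_evset_fst e)
      (by rw [show e.1 = f.1 from hef]; exact mem_evset_fst f)
  calc M.card = (M.image fun e => e.1).card := (Finset.card_image_of_injOn hinj).symm
    _ ≤ H.V1.card := Finset.card_le_card (by
        intro v hv
        obtain ⟨e, he, rfl⟩ := Finset.mem_image.mp hv
        exact H.mem1 e (hM.1 e he))

lemma matching_set_nonempty (H : TriSys α) :
    {n : ℕ | ∃ M : Finset (α × α × α), H.IsMatching M ∧ M.card = n}.Nonempty := by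
  refine ⟨0, ∅, ⟨fun e he => absurd he (by simp), ?_⟩, by simp⟩
  simp [Set.Pairwise]

lemma matching_set_bddAbove (H : TriSys α) :
    BddAbove {n : ℕ | ∃ M : Finset (α × α × α), H.IsMatching M ∧ M.card = n} := by
  refine ⟨H.V1.card, fun n hn => ?_⟩
  obtain ⟨M, hM, rfl⟩ := hn
  exact matching_card_le H hM

lemma le_nu (H : TriSys α) {M : Finset (α × α × α)} (hM : H.IsMatching M) :
    M.card ≤ H.nu :=
  le_csSup (matching_set_bddAbove H) ⟨M, hM, rfl⟩

lemma mem_delete_edges {H : TriSys α} {S : Finset α} {e : α × α × α} :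
    e ∈ (H.delete S).edges ↔
      e ∈ H.edges ∧ e.1 ∉ S ∧ e.2.1 ∉ S ∧ e.2.2 ∉ S := by
  simp [TriSys.delete, Multiset.mem_filter]

lemma delete_edges_subset (H : TriSys α) (S : Finset α) {e : α × α × α}
    (he : e ∈ (H.delete S).edges) : e ∈ H.edges :=
  (mem_delete_edges.mp he).1

lemma nu_delete_le (H : TriSys α) (S : Finset α) : (H.delete S).nu ≤ H.nu := by
  apply csSup_le (matching_set_nonempty _)
  rintro n ⟨M, hM, rfl⟩
  exact le_nu H ⟨fun e he => delete_edges_subset H S (hM.1 e he), hM.2⟩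

lemma saturating_hall {H : TriSys α} {Rf : Finset (Finset α)} {Wi : Finset α}
    (h : SaturatingR H Rf Wi) :
    ∀ U ⊆ Rf, U.card ≤ (RNbhd H Wi U).card := by
  classical
  obtain ⟨f, hinj, hf⟩ := h
  intro U hU
  have hcard : U.card = (U.image f).card :=
    (Finset.card_image_of_injOn (hinj.mono (Finset.coe_subset.mpr hU))).symm
  rw [hcard]
  apply Finset.card_le_card
  intro w hw
  obtain ⟨R, hR, rfl⟩ := Finset.mem_image.mp hw
  exact Finset.mem_filter.mpr ⟨(hf R (hU hR)).1, R, hR, (hf R (hU hR)).2⟩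

lemma hall_saturating {H : TriSys α} {Rf : Finset (Finset α)} {Wi : Finset α}
    (f₀ : Finset α → α)
    (h : ∀ U ⊆ Rf, U.card ≤ (RNbhd H Wi U).card) :
    SaturatingR H Rf Wi := by
  classical
  set t : {R // R ∈ Rf} → Finset α := fun R => Wi.filter fun w => RAdj H R.1 w with ht
  have hall : ∀ s : Finset {R // R ∈ Rf}, s.card ≤ (s.biUnion t).card := by
    intro s
    have h1 : s.card = (s.image Subtype.val).card :=
      (Finset.card_image_of_injOn Subtype.val_injective.injOn).symm
    have h2 : s.biUnion t = RNbhd H Wi (s.image Subtype.val) := by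
      ext w
      simp only [Finset.mem_biUnion, RNbhd, Finset.mem_filter, Finset.mem_image, ht]
      constructor
      · rintro ⟨R, hR, hw⟩
        exact ⟨hw.1, R.1, ⟨R, hR, rfl⟩, hw.2⟩
      · rintro ⟨hwWi, R, ⟨R', hR', rfl⟩, hadj⟩
        exact ⟨R', hR', hwWi, hadj⟩
    rw [h1, h2]
    refine h _ ?_
    intro R hR
    obtain ⟨R', _, rfl⟩ := Finset.mem_image.mp hR
    exact R'.2
  obtain ⟨f, hinj, hf⟩ := (Finset.all_card_le_biUnion_card_iff_existsInjective' t).mp hall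
  refine ⟨fun R => if hR : R ∈ Rf then f ⟨R, hR⟩ else f₀ R, ?_, ?_⟩
  · intro A hA B hB hAB
    simp only [Finset.mem_coe] at hA hB
    simp only [dif_pos hA, dif_pos hB] at hAB
    exact congrArg Subtype.val (hinj hAB)
  · intro R hR
    simp only [dif_pos hR]
    have := hf ⟨R, hR⟩
    exact ⟨(Finset.mem_filter.mp this).1, (Finset.mem_filter.mp this).2⟩

lemma hall_erase {H : TriSys α} {Rf : Finset (Finset α)} {Wi : Finset α} {s : α}
    (hall : ∀ U ⊆ Rf, U.card ≤ (RNbhd H Wi U).card)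
    (hsup : ∀ C, EssentialSet H Rf Wi C → s ∉ C) :
    ∀ U ⊆ Rf, U.card ≤ (RNbhd H (Wi.erase s) U).card := by
  classical
  intro U hU
  have key : RNbhd H (Wi.erase s) U = (RNbhd H Wi U).erase s := by
    ext w
    simp only [RNbhd, Finset.mem_filter, Finset.mem_erase]
    tauto
  rw [key]
  by_cases hs : s ∈ RNbhd H Wi U
  · by_contra hlt
    push_neg at hlt
    have h1 : ((RNbhd H Wi U).erase s).card = (RNbhd H Wi U).card - 1 :=
      Finset.card_erase_of_mem hs
    have h2 := hall U hU
    have h3 : 1 ≤ (RNbhd H Wi U).card := Finset.card_pos.mpr ⟨s, hs⟩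
    have h4 : (RNbhd H Wi U).card = U.card := by omega
    exact hsup (RNbhd H Wi U) ⟨U, hU, h4.symm, rfl⟩ hs
  · rw [Finset.erase_eq_of_notMem hs]
    exact hall U hU

lemma evset_subset_insert {H : TriSys α} {R : Finset α} {w : α} {e : α × α × α}
    (he : e ∈ H.edges) (hwe : w ∈ evset e) (hwR : w ∉ R)
    (hc : 2 ≤ (evset e ∩ R).card) : evset e ⊆ insert w R := by
  classical
  have h3 : (evset e).card = 3 := card_evset H he
  have hD : ((evset e).erase w).card = 2 := by
    rw [Finset.card_erase_of_mem hwe, h3]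
  have hsub : evset e ∩ R ⊆ (evset e).erase w := by
    intro x hx
    have hx1 := Finset.mem_inter.mp hx
    exact Finset.mem_erase.mpr ⟨fun h => hwR (h ▸ hx1.2), hx1.1⟩
  have heq : evset e ∩ R = (evset e).erase w :=
    Finset.eq_of_subset_of_card_le hsub (by omega)
  have hRsub : (evset e).erase w ⊆ R := by
    rw [← heq]; exact fun x hx => (Finset.mem_inter.mp hx).2
  intro x hx
  by_cases hxw : x = w
  · exact Finset.mem_insert.mpr (Or.inl hxw)
  · exact Finset.mem_insert.mpr (Or.inr (hRsub (Finset.mem_erase.mpr ⟨hxw, hx⟩)))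

lemma radj_delete {H : TriSys α} {S R : Finset α} {w : α}
    (hw : w ∉ S) (hwR : w ∉ R) (hRS : Disjoint R S)
    (h : RAdj H R w) : RAdj (H.delete S) R w := by
  obtain ⟨e, he, hwe, hcard⟩ := h
  have hsub : evset e ⊆ insert w R := evset_subset_insert he hwe hwR hcard
  have hnotS : ∀ v ∈ evset e, v ∉ S := by
    intro v hv hvS
    rcases Finset.mem_insert.mp (hsub hv) with rfl | hvR
    · exact hw hvS
    · exact Finset.disjoint_left.mp hRS hvR hvS
  refine ⟨e, mem_delete_edges.mpr ⟨he, ?_, ?_, ?_⟩, hwe, hcard⟩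
  · exact hnotS e.1 (by simp [evset])
  · exact hnotS e.2.1 (by simp [evset])
  · exact hnotS e.2.2 (by simp [evset])

lemma inducedEdges_delete {H : TriSys α} {S A : Finset α} (hAS : Disjoint A S) :
    inducedEdges (H.delete S) A = inducedEdges H A := by
  classical
  ext e
  simp only [inducedEdges, Multiset.mem_toFinset, Multiset.mem_filter]
  constructor
  · rintro ⟨he, hsub⟩
    exact ⟨delete_edges_subset H S he, hsub⟩
  · rintro ⟨he, hsub⟩
    have : ∀ v ∈ evset e, v ∉ S :=
      fun v hv => Finset.disjoint_left.mp hAS (hsub hv)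
    exact ⟨mem_delete_edges.mpr ⟨he, this e.1 (by simp [evset]),
      this e.2.1 (by simp [evset]), this e.2.2 (by simp [evset])⟩, hsub⟩

lemma verts_delete (H : TriSys α) (S : Finset α) :
    (H.delete S).verts = H.verts \ S := by
  classical
  simp only [TriSys.verts, TriSys.delete]
  ext v
  simp only [Finset.mem_union, Finset.mem_sdiff]
  tauto

lemma cls_delete (H : TriSys α) (S : Finset α) (i : Fin 3) :
    (H.delete S).cls i = H.cls i \ S := by
  fin_cases i <;> rfl

end Helpers

/-- Removing a set `S` of superfluous vertices, at most one from each vertex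
class, from a matchable FR-partition `(𝓕, 𝓡, W)` yields a matchable
FR-partition `(𝓕, 𝓡, W \ S)` of `H − S`; in particular `ν(H − S) = ν(H)`. -/
theorem remove_superfluous_matchable (H : TriSys α) (P : FRData α)
    (hFR : IsFRPartition H P) (hM : IsMatchable H P)
    (S : Finset α) (hSW : S ⊆ P.W)
    (hSsup : ∀ s ∈ S, SuperfluousVert H P s)
    (hSone : ∀ i : Fin 3, (S ∩ H.cls i).card ≤ 1) :
    IsFRPartition (H.delete S) ⟨P.Ffam, P.Rfam, P.W \ S⟩ ∧
    IsMatchable (H.delete S) ⟨P.Ffam, P.Rfam, P.W \ S⟩ ∧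
    (H.delete S).nu = H.nu := by
  classical
  obtain ⟨hFF, hRR, hFRd, hFW, hRW, hUnion, hFano, hRtrip, hCard⟩ := hFR
  have hFS : ∀ A ∈ P.Ffam, Disjoint A S := fun A hA => (hFW A hA).mono_right hSW
  have hRS : ∀ B ∈ P.Rfam, Disjoint B S := fun B hB => (hRW B hB).mono_right hSW
  have hWi : ∀ i : Fin 3, (P.W \ S) ∩ (H.delete S).cls i = (P.W ∩ H.cls i) \ S := by
    intro i
    rw [cls_delete]
    ext v
    simp only [Finset.mem_inter, Finset.mem_sdiff]
    tauto
  have hall1 : ∀ i : Fin 3, ∀ U ⊆ P.Rfam,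
      U.card ≤ (RNbhd H ((P.W ∩ H.cls i) \ S) U).card := by
    intro i
    have hall0 := saturating_hall (hM i)
    rcases (S ∩ H.cls i).eq_empty_or_nonempty with hemp | ⟨s, hs⟩
    · have hno : (P.W ∩ H.cls i) \ S = P.W ∩ H.cls i := by
        ext v
        simp only [Finset.mem_sdiff, Finset.mem_inter]
        constructor
        · rintro ⟨h, -⟩; exact h
        · rintro ⟨hvW, hvi⟩
          refine ⟨⟨hvW, hvi⟩, fun hvS => ?_⟩
          have hvm : v ∈ S ∩ H.cls i := Finset.mem_inter.mpr ⟨hvS, hvi⟩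
          rw [hemp] at hvm
          exact absurd hvm (Finset.notMem_empty v)
      rw [hno]
      exact hall0
    · have hsingle : S ∩ H.cls i = {s} :=
        Finset.eq_singleton_iff_unique_mem.mpr
          ⟨hs, fun t ht => Finset.card_le_one.mp (hSone i) t ht s hs⟩
      have hsS : s ∈ S := (Finset.mem_inter.mp hs).1
      have hsi : s ∈ H.cls i := (Finset.mem_inter.mp hs).2
      have hseq : (P.W ∩ H.cls i) \ S = (P.W ∩ H.cls i).erase s := by
        ext v
        simp only [Finset.mem_sdiff, Finset.mem_erase, Finset.mem_inter]
        constructor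
        · rintro ⟨⟨hvW, hvi⟩, hvS⟩
          exact ⟨fun h => hvS (h ▸ hsS), hvW, hvi⟩
        · rintro ⟨hvs, hvW, hvi⟩
          refine ⟨⟨hvW, hvi⟩, fun hvS => hvs ?_⟩
          have hvm : v ∈ S ∩ H.cls i := Finset.mem_inter.mpr ⟨hvS, hvi⟩
          rw [hsingle] at hvm
          exact Finset.mem_singleton.mp hvm
      rw [hseq]
      obtain ⟨j, hj⟩ := hSsup s hsS
      have hji : j = i := by
        by_contra hne
        exact Finset.disjoint_left.mp (cls_disjoint H hne)
          (Finset.mem_inter.mp hj.1).2 hsi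
      rw [hji] at hj
      exact hall_erase hall0 hj.2
  have hsatH : ∀ i : Fin 3, SaturatingR H P.Rfam ((P.W ∩ H.cls i) \ S) := by
    intro i
    obtain ⟨f₀, -, -⟩ := hM i
    exact hall_saturating f₀ (hall1 i)
  have hmatch : IsMatchable (H.delete S) ⟨P.Ffam, P.Rfam, P.W \ S⟩ := by
    intro i
    obtain ⟨f, hinj, hf⟩ := hsatH i
    refine ⟨f, hinj, fun R hR => ?_⟩
    obtain ⟨hfWm, hfadj⟩ := hf R hR
    have hfW' := Finset.mem_sdiff.mp hfWm
    have hfmem : f R ∈ (P.W \ S) ∩ (H.delete S).cls i := by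
      rw [hWi i]; exact hfWm
    refine ⟨hfmem, radj_delete hfW'.2 ?_ (hRS R hR) hfadj⟩
    exact Finset.disjoint_right.mp (hRW R hR) (Finset.mem_inter.mp hfW'.1).1
  -- the matching number
  have hFedge : ∀ A ∈ P.Ffam, ∃ e, e ∈ H.edges ∧ evset e ⊆ A := by
    intro A hA
    obtain ⟨a, b, c, x, y, z, -, -, -, -, -, -, -, -, -, hAeq, hInd⟩ := hFano A hA
    have hmem : (a, b, c) ∈ inducedEdges H A := by
      rw [hInd]
      simp [FanoEdges]
    rw [inducedEdges, Multiset.mem_toFinset, Multiset.mem_filter] at hmem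
    exact ⟨(a, b, c), hmem.1, hmem.2⟩
  choose eF heF1 heF2 using hFedge
  obtain ⟨f, hfinj, hfprop⟩ := hmatch 0
  have hfWS : ∀ R ∈ P.Rfam, f R ∈ P.W ∧ f R ∉ S := by
    intro R hR
    have h1 := (hfprop R hR).1
    exact Finset.mem_sdiff.mp (Finset.mem_inter.mp h1).1
  have hfR : ∀ R ∈ P.Rfam, f R ∉ R := fun R hR =>
    Finset.disjoint_right.mp (hRW R hR) (hfWS R hR).1
  have hRedge : ∀ R ∈ P.Rfam, ∃ e, e ∈ (H.delete S).edges ∧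
      evset e ⊆ insert (f R) R := by
    intro R hR
    obtain ⟨e, he, hwe, hc⟩ := (hfprop R hR).2
    exact ⟨e, he, evset_subset_insert he hwe (hfR R hR) hc⟩
  choose eR heR1 heR2 using hRedge
  set MF : Finset (α × α × α) := P.Ffam.attach.image (fun A => eF A.1 A.2) with hMF
  set MR : Finset (α × α × α) := P.Rfam.attach.image (fun R => eR R.1 R.2) with hMR
  have hkey : ∀ R ∈ P.Rfam, ∀ R' ∈ P.Rfam, R ≠ R' →
      Disjoint (insert (f R) R) (insert (f R') R') := by
    intro R hR R' hR' hne
    rw [Finset.disjoint_left]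
    intro v hv hv'
    rcases Finset.mem_insert.mp hv with rfl | hvR
    · rcases Finset.mem_insert.mp hv' with heq | hvR'
      · exact hne (hfinj (Finset.mem_coe.mpr hR) (Finset.mem_coe.mpr hR') heq)
      · exact Finset.disjoint_right.mp (hRW R' hR') (hfWS R hR).1 hvR'
    · rcases Finset.mem_insert.mp hv' with heq | hvR'
      · have hvW : v ∈ P.W := by rw [heq]; exact (hfWS R' hR').1
        exact Finset.disjoint_right.mp (hRW R hR) hvW hvR
      · exact Finset.disjoint_left.mp (hRR R hR R' hR' hne) hvR hvR'
  have hAins : ∀ A ∈ P.Ffam, ∀ R ∈ P.Rfam, Disjoint A (insert (f R) R) := by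
    intro A hA R hR
    rw [Finset.disjoint_insert_right]
    exact ⟨Finset.disjoint_right.mp (hFW A hA) (hfWS R hR).1, hFRd A hA R hR⟩
  have hMFsub : ∀ A, ∀ hA : A ∈ P.Ffam, eF A hA ∈ (H.delete S).edges := by
    intro A hA
    have hsub := heF2 A hA
    have hns : ∀ v ∈ evset (eF A hA), v ∉ S :=
      fun v hv => Finset.disjoint_left.mp (hFS A hA) (hsub hv)
    exact mem_delete_edges.mpr ⟨heF1 A hA, hns _ (by simp [evset]),
      hns _ (by simp [evset]), hns _ (by simp [evset])⟩
  have hMatch : (H.delete S).IsMatching (MF ∪ MR) := by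
    constructor
    · intro e he
      rcases Finset.mem_union.mp he with h | h
      · obtain ⟨A, -, rfl⟩ := Finset.mem_image.mp h
        exact hMFsub A.1 A.2
      · obtain ⟨R, -, rfl⟩ := Finset.mem_image.mp h
        exact heR1 R.1 R.2
    · intro e he e' he' hne
      have he2 := Finset.mem_coe.mp he
      have he2' := Finset.mem_coe.mp he'
      rcases Finset.mem_union.mp he2 with h | h <;>
        rcases Finset.mem_union.mp he2' with h' | h'
      · obtain ⟨A, -, rfl⟩ := Finset.mem_image.mp h
        obtain ⟨A', -, rfl⟩ := Finset.mem_image.mp h'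
        have hne' : A.1 ≠ A'.1 := by
          intro hA
          apply hne
          have : A = A' := Subtype.ext hA
          rw [this]
        exact (hFF A.1 A.2 A'.1 A'.2 hne').mono (heF2 A.1 A.2) (heF2 A'.1 A'.2)
      · obtain ⟨A, -, rfl⟩ := Finset.mem_image.mp h
        obtain ⟨R, -, rfl⟩ := Finset.mem_image.mp h'
        exact (hAins A.1 A.2 R.1 R.2).mono (heF2 A.1 A.2) (heR2 R.1 R.2)
      · obtain ⟨R, -, rfl⟩ := Finset.mem_image.mp h
        obtain ⟨A, -, rfl⟩ := Finset.mem_image.mp h'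
        exact ((hAins A.1 A.2 R.1 R.2).symm).mono (heR2 R.1 R.2) (heF2 A.1 A.2)
      · obtain ⟨R, -, rfl⟩ := Finset.mem_image.mp h
        obtain ⟨R', -, rfl⟩ := Finset.mem_image.mp h'
        have hne' : R.1 ≠ R'.1 := by
          intro hR
          apply hne
          have : R = R' := Subtype.ext hR
          rw [this]
        exact (hkey R.1 R.2 R'.1 R'.2 hne').mono (heR2 R.1 R.2) (heR2 R'.1 R'.2)
  have hcardMF : MF.card = P.Ffam.card := by
    rw [hMF, Finset.card_image_of_injOn, Finset.card_attach]
    intro A hA A' hA' heq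
    by_contra hne
    have hne' : A.1 ≠ A'.1 := fun h => hne (Subtype.ext h)
    have h1 := heF2 A.1 A.2 (mem_evset_fst _)
    have heq' : eF A.1 A.2 = eF A'.1 A'.2 := heq
    have h2 : (eF A.1 A.2).1 ∈ A'.1 := by
      rw [heq']
      exact heF2 A'.1 A'.2 (mem_evset_fst _)
    exact Finset.disjoint_left.mp (hFF A.1 A.2 A'.1 A'.2 hne') h1 h2
  have hcardMR : MR.card = P.Rfam.card := by
    rw [hMR, Finset.card_image_of_injOn, Finset.card_attach]
    intro R hR R' hR' heq
    by_contra hne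
    have hne' : R.1 ≠ R'.1 := fun h => hne (Subtype.ext h)
    have h1 := heR2 R.1 R.2 (mem_evset_fst _)
    have heq' : eR R.1 R.2 = eR R'.1 R'.2 := heq
    have h2 : (eR R.1 R.2).1 ∈ insert (f R'.1) R'.1 := by
      rw [heq']
      exact heR2 R'.1 R'.2 (mem_evset_fst _)
    exact Finset.disjoint_left.mp (hkey R.1 R.2 R'.1 R'.2 hne') h1 h2
  have hdisjM : Disjoint MF MR := by
    rw [Finset.disjoint_left]
    intro e heMF heMR
    obtain ⟨A, -, hEA⟩ := Finset.mem_image.mp heMF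
    obtain ⟨R, -, hER⟩ := Finset.mem_image.mp heMR
    have h1 : e.1 ∈ A.1 := by rw [← hEA]; exact heF2 A.1 A.2 (mem_evset_fst _)
    have h2 : e.1 ∈ insert (f R.1) R.1 := by
      rw [← hER]; exact heR2 R.1 R.2 (mem_evset_fst _)
    exact Finset.disjoint_left.mp (hAins A.1 A.2 R.1 R.2) h1 h2
  have hcardM : (MF ∪ MR).card = P.Ffam.card + P.Rfam.card := by
    rw [Finset.card_union_of_disjoint hdisjM, hcardMF, hcardMR]
  have hge : H.nu ≤ (H.delete S).nu := by
    rw [← hCard, ← hcardM]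
    exact le_nu _ hMatch
  have hnueq : (H.delete S).nu = H.nu := le_antisymm (nu_delete_le H S) hge
  refine ⟨⟨hFF, hRR, hFRd, ?_, ?_, ?_, ?_, ?_, ?_⟩, hmatch, hnueq⟩
  · exact fun A hA => (hFW A hA).mono_right Finset.sdiff_subset
  · exact fun B hB => (hRW B hB).mono_right Finset.sdiff_subset
  · have hvF : ∀ v ∈ famUnion P.Ffam, v ∉ S := by
      intro v hv hvS
      obtain ⟨A, hA, hvA⟩ := Finset.mem_biUnion.mp hv
      exact Finset.disjoint_left.mp (hFS A hA) hvA hvS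
    have hvR : ∀ v ∈ famUnion P.Rfam, v ∉ S := by
      intro v hv hvS
      obtain ⟨B, hB, hvB⟩ := Finset.mem_biUnion.mp hv
      exact Finset.disjoint_left.mp (hRS B hB) hvB hvS
    ext v
    rw [verts_delete, Finset.mem_sdiff, ← hUnion]
    simp only [Finset.mem_union, Finset.mem_sdiff]
    constructor
    · rintro ((h | h) | ⟨hW, hS⟩)
      · exact ⟨Or.inl (Or.inl h), hvF v h⟩
      · exact ⟨Or.inl (Or.inr h), hvR v h⟩
      · exact ⟨Or.inr hW, hS⟩
    · rintro ⟨(h | h) | h, hS⟩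
      · exact Or.inl (Or.inl h)
      · exact Or.inl (Or.inr h)
      · exact Or.inr ⟨h, hS⟩
  · intro A hA
    obtain ⟨a, b, c, x, y, z, ha, hxm, hb, hy, hc, hz, hax, hby, hcz, hAeq, hInd⟩ :=
      hFano A hA
    have hAS' : Disjoint A S := hFS A hA
    have hmemA : ∀ v ∈ A, v ∉ S := fun v hv => Finset.disjoint_left.mp hAS' hv
    refine ⟨a, b, c, x, y, z, ?_, ?_, ?_, ?_, ?_, ?_, hax, hby, hcz, hAeq, ?_⟩
    · exact Finset.mem_sdiff.mpr ⟨ha, hmemA a (by rw [hAeq]; simp)⟩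
    · exact Finset.mem_sdiff.mpr ⟨hxm, hmemA x (by rw [hAeq]; simp)⟩
    · exact Finset.mem_sdiff.mpr ⟨hb, hmemA b (by rw [hAeq]; simp)⟩
    · exact Finset.mem_sdiff.mpr ⟨hy, hmemA y (by rw [hAeq]; simp)⟩
    · exact Finset.mem_sdiff.mpr ⟨hc, hmemA c (by rw [hAeq]; simp)⟩
    · exact Finset.mem_sdiff.mpr ⟨hz, hmemA z (by rw [hAeq]; simp)⟩
    · rw [inducedEdges_delete hAS']
      exact hInd
  · intro B hB
    obtain ⟨r1, h1, r2, h2, r3, h3, hBeq⟩ := hRtrip B hB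
    have hmemB : ∀ v ∈ B, v ∉ S := fun v hv => Finset.disjoint_left.mp (hRS B hB) hv
    exact ⟨r1, Finset.mem_sdiff.mpr ⟨h1, hmemB r1 (by rw [hBeq]; simp)⟩,
      r2, Finset.mem_sdiff.mpr ⟨h2, hmemB r2 (by rw [hBeq]; simp)⟩,
      r3, Finset.mem_sdiff.mpr ⟨h3, hmemB r3 (by rw [hBeq]; simp)⟩, hBeq⟩
  · rw [hnueq]
    exact hCard
end
end
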